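/- Proposition 3 (Feasibility of the controller QP). Assume X_r is compact and nonempty, and that for every (x,u) ∈ X_r there exists q ∈ ℝ^m such that: if b(u) = 0 then ⟨∇b(u), q⟩ > 0, and if h_r(x,u) = 0 then (∂h_r/∂u)(x,u)·q + (∂h_r/∂x)(x,u)·f(x,u) > 0. Then there exist α_f > 0 and γ_f > 0 such that for all α > α_f and all γ > γ_f, for every (x,u) ∈ X_r there exists q ∈ ℝ^m with ⟨∇b(u), q⟩ + α·b(u) ≥ 0 and (∂h_r/∂x)(x,u)·f(x,u) + (∂h_r/∂u)(x,u)·q + γ·h_r(x,u) ≥ 0. -/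

import Mathlib

open Set Filter Topology
open scoped RealInnerProductSpace

noncomputable def hseq {n m : ℕ}
    (f : EuclideanSpace ℝ (Fin n) × EuclideanSpace ℝ (Fin m) → EuclideanSpace ℝ (Fin n))
    (h : EuclideanSpace ℝ (Fin n) → ℝ) (β : ℝ) :
    ℕ → EuclideanSpace ℝ (Fin n) × EuclideanSpace ℝ (Fin m) → ℝ
  | 0 => fun p => h p.1
  | i + 1 => fun p =>
      fderiv ℝ (fun x => hseq f h β i (x, p.2)) p.1 (f p) + β * hseq f h β i p

noncomputable def Xset {n m : ℕ}
    (f : EuclideanSpace ℝ (Fin n) × EuclideanSpace ℝ (Fin m) → EuclideanSpace ℝ (Fin n))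
    (h : EuclideanSpace ℝ (Fin n) → ℝ) (b : EuclideanSpace ℝ (Fin m) → ℝ) (β : ℝ) (i : ℕ) :
    Set (EuclideanSpace ℝ (Fin n) × EuclideanSpace ℝ (Fin m)) :=
  {p | 0 ≤ h p.1 ∧ 0 ≤ b p.2 ∧ 0 ≤ hseq f h β i p}

section aux
variable {E F : Type*} [NormedAddCommGroup E] [NormedSpace ℝ E]
  [NormedAddCommGroup F] [NormedSpace ℝ F]

lemma fderiv_partial_left (φ : E × F → ℝ) (a : E) (c : F)
    (hφ : DifferentiableAt ℝ φ (a, c)) (v : E) :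
    fderiv ℝ (fun x => φ (x, c)) a v = fderiv ℝ φ (a, c) (v, 0) := by
  have h1 : HasFDerivAt (fun x : E => φ (x, c))
      ((fderiv ℝ φ (a, c)).comp (ContinuousLinearMap.inl ℝ E F)) a :=
    hφ.hasFDerivAt.comp a (hasFDerivAt_prodMk_left a c)
  rw [h1.fderiv]; rfl

lemma fderiv_partial_right (φ : E × F → ℝ) (a : E) (c : F)
    (hφ : DifferentiableAt ℝ φ (a, c)) (v : F) :
    fderiv ℝ (fun u => φ (a, u)) c v = fderiv ℝ φ (a, c) (0, v) := by
  have h1 : HasFDerivAt (fun u : F => φ (a, u))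
      ((fderiv ℝ φ (a, c)).comp (ContinuousLinearMap.inr ℝ E F)) c :=
    hφ.hasFDerivAt.comp c (hasFDerivAt_prodMk_right a c)
  rw [h1.fderiv]; rfl

end aux

lemma hseq_contDiff {n m : ℕ} {r : ℕ}
    (f : EuclideanSpace ℝ (Fin n) × EuclideanSpace ℝ (Fin m) → EuclideanSpace ℝ (Fin n))
    (h : EuclideanSpace ℝ (Fin n) → ℝ) (β : ℝ)
    (hf : ContDiff ℝ (r + 1 : ℕ) f) (hh : ContDiff ℝ (r + 2 : ℕ) h) :
    ∀ i, i ≤ r + 1 → ContDiff ℝ ((r + 2 - i : ℕ)) (hseq f h β i) := by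
  intro i
  induction i with
  | zero => intro _; exact hh.comp contDiff_fst
  | succ i ih =>
    intro hi
    have hi' : i ≤ r := by omega
    have IH : ContDiff ℝ ((r + 2 - i : ℕ)) (hseq f h β i) := ih (by omega)
    have hdiff : Differentiable ℝ (hseq f h β i) := by
      apply IH.differentiable
      exact_mod_cast (show r + 2 - i ≠ 0 by omega)
    have heq : hseq f h β (i + 1) = fun p =>
        fderiv ℝ (hseq f h β i) p (f p, (0 : EuclideanSpace ℝ (Fin m)))
          + β * hseq f h β i p := by
      funext p
      show fderiv ℝ (fun x => hseq f h β i (x, p.2)) p.1 (f p) + β * hseq f h β i p = _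
      rw [fderiv_partial_left (hseq f h β i) p.1 p.2 (by simpa using hdiff (p.1, p.2)) (f p)]
    rw [heq]
    have hA : ContDiff ℝ ((r + 1 - i : ℕ)) (fderiv ℝ (hseq f h β i)) := by
      apply IH.fderiv_right
      have : (r + 1 - i) + 1 = r + 2 - i := by omega
      exact_mod_cast this.le
    have hv : ContDiff ℝ ((r + 1 - i : ℕ))
        (fun p => (f p, (0 : EuclideanSpace ℝ (Fin m)))) :=
      (hf.of_le (m := ((r + 1 - i : ℕ) : WithTop ℕ∞)) (by exact_mod_cast Nat.sub_le _ _)).prodMk contDiff_const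
    have hres : ContDiff ℝ ((r + 1 - i : ℕ)) (fun p =>
        fderiv ℝ (hseq f h β i) p (f p, (0 : EuclideanSpace ℝ (Fin m)))
          + β * hseq f h β i p) :=
      (hA.clm_apply hv).add (contDiff_const.mul (IH.of_le (by exact_mod_cast by omega)))
    have hnum : r + 2 - (i + 1) = r + 1 - i := by omega
    rw [hnum]
    exact hres

/-- Proposition 3 (Feasibility of the controller QP). If `X_r` is compact and nonempty and the
MFCQ-type condition holds at every point of `X_r`, then there exist `α_f, γ_f > 0` such that for
all `α > α_f`, `γ > γ_f`, the controller QP is feasible at every point of `X_r`. -/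
theorem qp_feasibility
    {n m r : ℕ} (hn : 0 < n) (hm : 0 < m) (hr : 0 < r)
    (f : EuclideanSpace ℝ (Fin n) × EuclideanSpace ℝ (Fin m) → EuclideanSpace ℝ (Fin n))
    (h : EuclideanSpace ℝ (Fin n) → ℝ) (b : EuclideanSpace ℝ (Fin m) → ℝ)
    (hf : ContDiff ℝ (r + 1 : ℕ) f) (hh : ContDiff ℝ (r + 2 : ℕ) h) (hb : ContDiff ℝ 2 b)
    (β : ℝ) (hβ : 0 < β)
    (hcomp : IsCompact (Xset f h b β r)) (hne : (Xset f h b β r).Nonempty)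
    (hcq : ∀ p ∈ Xset f h b β r, ∃ q : EuclideanSpace ℝ (Fin m),
      (b p.2 = 0 → 0 < ⟪gradient b p.2, q⟫) ∧
      (hseq f h β r p = 0 →
        0 < fderiv ℝ (fun u => hseq f h β r (p.1, u)) p.2 q
          + fderiv ℝ (fun x => hseq f h β r (x, p.2)) p.1 (f p))) :
    ∃ αf > (0 : ℝ), ∃ γf > (0 : ℝ), ∀ α > αf, ∀ γ > γf,
      ∀ p ∈ Xset f h b β r, ∃ q : EuclideanSpace ℝ (Fin m),
        0 ≤ ⟪gradient b p.2, q⟫ + α * b p.2 ∧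
        0 ≤ fderiv ℝ (fun x => hseq f h β r (x, p.2)) p.1 (f p)
          + fderiv ℝ (fun u => hseq f h β r (p.1, u)) p.2 q + γ * hseq f h β r p := by
  classical
  set Hf := hseq f h β r with hHfdef
  set K := Xset f h b β r with hKdef
  have hH2 : ContDiff ℝ (2 : ℕ) Hf := by
    have h1 := hseq_contDiff f h β hf hh r (by omega)
    have e : r + 2 - r = 2 := by omega
    rwa [e] at h1
  have hHdiff : Differentiable ℝ Hf := hH2.differentiable (by norm_num)
  have hbdiff : Differentiable ℝ b := hb.differentiable (by norm_num)
  have hΦ : Continuous (fderiv ℝ Hf) := hH2.continuous_fderiv (by norm_num)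
  have hgb : Continuous (fderiv ℝ b) := hb.continuous_fderiv (by norm_num)
  have egrad : ∀ (u q : EuclideanSpace ℝ (Fin m)), ⟪gradient b u, q⟫ = fderiv ℝ b u q := by
    intro u q
    rw [gradient, InnerProductSpace.toDual_symm_apply]
  have eleft : ∀ p : EuclideanSpace ℝ (Fin n) × EuclideanSpace ℝ (Fin m),
      fderiv ℝ (fun x => Hf (x, p.2)) p.1 (f p)
        = fderiv ℝ Hf p (f p, (0 : EuclideanSpace ℝ (Fin m))) :=
    fun p => fderiv_partial_left Hf p.1 p.2 (hHdiff (p.1, p.2)) (f p)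
  have eright : ∀ (p : EuclideanSpace ℝ (Fin n) × EuclideanSpace ℝ (Fin m))
      (q : EuclideanSpace ℝ (Fin m)),
      fderiv ℝ (fun u => Hf (p.1, u)) p.2 q
        = fderiv ℝ Hf p ((0 : EuclideanSpace ℝ (Fin n)), q) :=
    fun p q => fderiv_partial_right Hf p.1 p.2 (hHdiff (p.1, p.2)) q
  have hBc : Continuous (fun p' : EuclideanSpace ℝ (Fin n) × EuclideanSpace ℝ (Fin m)
      => b p'.2) := hb.continuous.comp continuous_snd
  have hHc : Continuous Hf := hH2.continuous
  have key : ∀ p ∈ K, ∃ q : EuclideanSpace ℝ (Fin m),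
      ∃ U : Set (EuclideanSpace ℝ (Fin n) × EuclideanSpace ℝ (Fin m)), ∃ A Γ : ℝ,
      IsOpen U ∧ p ∈ U ∧ 0 ≤ A ∧ 0 ≤ Γ ∧
      ∀ p' ∈ U, p' ∈ K → ∀ α, A ≤ α → ∀ γ, Γ ≤ γ →
        (0 ≤ fderiv ℝ b p'.2 q + α * b p'.2) ∧
        (0 ≤ fderiv ℝ Hf p' (f p', 0) + fderiv ℝ Hf p' (0, q) + γ * Hf p') := by
    intro p hp
    obtain ⟨q, hq1, hq2⟩ := hcq p hp
    rw [egrad] at hq1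
    rw [eright p q, eleft p] at hq2
    set Gq : EuclideanSpace ℝ (Fin n) × EuclideanSpace ℝ (Fin m) → ℝ :=
      fun p' => fderiv ℝ b p'.2 q with hGqdef
    have hGqc : Continuous Gq := (hgb.comp continuous_snd).clm_apply continuous_const
    set Eq : EuclideanSpace ℝ (Fin n) × EuclideanSpace ℝ (Fin m) → ℝ :=
      fun p' => fderiv ℝ Hf p' (f p', 0) + fderiv ℝ Hf p' (0, q) with hEqdef
    have hEqc : Continuous Eq :=
      (hΦ.clm_apply (hf.continuous.prodMk continuous_const)).add
        (hΦ.clm_apply continuous_const)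
    have part1 : ∃ U₁ : Set (EuclideanSpace ℝ (Fin n) × EuclideanSpace ℝ (Fin m)), ∃ A : ℝ,
        IsOpen U₁ ∧ p ∈ U₁ ∧ 0 ≤ A ∧
        ∀ p' ∈ U₁, 0 ≤ b p'.2 → ∀ α, A ≤ α → 0 ≤ Gq p' + α * b p'.2 := by
      rcases eq_or_lt_of_le hp.2.1 with hb0 | hbpos
      · refine ⟨{p' | 0 < Gq p'}, 0, isOpen_lt continuous_const hGqc, hq1 hb0.symm,
          le_refl 0, ?_⟩
        intro p' hp' hb' α hα
        have h1 : 0 ≤ α * b p'.2 := mul_nonneg hα hb'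
        have h2 : 0 < Gq p' := hp'
        linarith
      · refine ⟨{p' | b p.2 / 2 < b p'.2} ∩ {p' | Gq p - 1 < Gq p'},
          2 * (|Gq p| + 1) / (b p.2),
          (isOpen_lt continuous_const hBc).inter (isOpen_lt continuous_const hGqc),
          ⟨by simp only [mem_setOf_eq]; linarith, by simp only [mem_setOf_eq]; linarith⟩,
          by positivity, ?_⟩
        intro p' hp' _ α hα
        have h1 : b p.2 / 2 < b p'.2 := hp'.1
        have h2 : Gq p - 1 < Gq p' := hp'.2
        have hA0 : (0:ℝ) ≤ 2 * (|Gq p| + 1) / (b p.2) := by positivity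
        have hmul : 2 * (|Gq p| + 1) / (b p.2) * (b p.2 / 2) ≤ α * b p'.2 :=
          mul_le_mul hα h1.le (by linarith) (le_trans hA0 hα)
        have heqv : 2 * (|Gq p| + 1) / (b p.2) * (b p.2 / 2) = |Gq p| + 1 := by
          field_simp
        rw [heqv] at hmul
        have habs : -(|Gq p|) ≤ Gq p := neg_abs_le _
        linarith
    have part2 : ∃ U₂ : Set (EuclideanSpace ℝ (Fin n) × EuclideanSpace ℝ (Fin m)), ∃ Γ : ℝ,
        IsOpen U₂ ∧ p ∈ U₂ ∧ 0 ≤ Γ ∧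
        ∀ p' ∈ U₂, 0 ≤ Hf p' → ∀ γ, Γ ≤ γ → 0 ≤ Eq p' + γ * Hf p' := by
      rcases eq_or_lt_of_le hp.2.2 with hH0 | hHpos
      · have hEp : 0 < Eq p := by
          have := hq2 hH0.symm
          simp only [hEqdef]
          linarith
        refine ⟨{p' | 0 < Eq p'}, 0, isOpen_lt continuous_const hEqc, hEp, le_refl 0, ?_⟩
        intro p' hp' hH' γ hγ
        have h1 : 0 ≤ γ * Hf p' := mul_nonneg hγ hH'
        have h2 : 0 < Eq p' := hp'
        linarith
      · refine ⟨{p' | Hf p / 2 < Hf p'} ∩ {p' | Eq p - 1 < Eq p'},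
          2 * (|Eq p| + 1) / (Hf p),
          (isOpen_lt continuous_const hHc).inter (isOpen_lt continuous_const hEqc),
          ⟨by simp only [mem_setOf_eq]; linarith, by simp only [mem_setOf_eq]; linarith⟩,
          by positivity, ?_⟩
        intro p' hp' _ γ hγ
        have h1 : Hf p / 2 < Hf p' := hp'.1
        have h2 : Eq p - 1 < Eq p' := hp'.2
        have hA0 : (0:ℝ) ≤ 2 * (|Eq p| + 1) / (Hf p) := by positivity
        have hmul : 2 * (|Eq p| + 1) / (Hf p) * (Hf p / 2) ≤ γ * Hf p' :=
          mul_le_mul hγ h1.le (by linarith) (le_trans hA0 hγ)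
        have heqv : 2 * (|Eq p| + 1) / (Hf p) * (Hf p / 2) = |Eq p| + 1 := by
          have hne : Hf p ≠ 0 := hHpos.ne'
          field_simp
        rw [heqv] at hmul
        have habs : -(|Eq p|) ≤ Eq p := neg_abs_le _
        linarith
    obtain ⟨U₁, A, hU₁o, hpU₁, hA0, hU₁⟩ := part1
    obtain ⟨U₂, Γ, hU₂o, hpU₂, hΓ0, hU₂⟩ := part2
    refine ⟨q, U₁ ∩ U₂, A, Γ, hU₁o.inter hU₂o, ⟨hpU₁, hpU₂⟩, hA0, hΓ0, ?_⟩
    intro p' hp' hpK α hα γ hγ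
    exact ⟨hU₁ p' hp'.1 hpK.2.1 α hα, hU₂ p' hp'.2 hpK.2.2 γ hγ⟩
  choose qc Uc Ac Γc hUo hpU hA0 hΓ0 hprop using key
  obtain ⟨t, ht⟩ := hcomp.elim_finite_subcover (fun i : K => Uc i i.2)
    (fun i => hUo i i.2) (fun p hp => mem_iUnion.mpr ⟨⟨p, hp⟩, hpU p hp⟩)
  have hsA : 0 ≤ ∑ i ∈ t, Ac i i.2 := Finset.sum_nonneg fun i _ => hA0 i i.2
  have hsΓ : 0 ≤ ∑ i ∈ t, Γc i i.2 := Finset.sum_nonneg fun i _ => hΓ0 i i.2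
  refine ⟨1 + ∑ i ∈ t, Ac i i.2, by linarith, 1 + ∑ i ∈ t, Γc i i.2, by linarith, ?_⟩
  intro α hα γ hγ p hp
  obtain ⟨i, hi, hpUi⟩ := mem_iUnion₂.mp (ht hp)
  have hAi : Ac i i.2 ≤ α := by
    have := Finset.single_le_sum (f := fun j : K => Ac j.1 j.2) (fun j _ => hA0 j j.2) hi
    linarith
  have hΓi : Γc i i.2 ≤ γ := by
    have := Finset.single_le_sum (f := fun j : K => Γc j.1 j.2) (fun j _ => hΓ0 j j.2) hi
    linarith
  obtain ⟨c1, c2⟩ := hprop i i.2 p hpUi hp α hAi γ hΓi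
  refine ⟨qc i i.2, ?_, ?_⟩
  · rw [egrad]; exact c1
  · rw [eleft p, eright p (qc i i.2)]; exact c2
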